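/- Let d ≥ 2 and let ψ₀, ψ₁ ∈ EuclideanSpace ℂ (Fin d) be unit vectors with ‖⟪ψ₀, ψ₁⟫‖² ≤ 1/2, and let ρ_i ∈ Matrix (Fin d) (Fin d) ℂ be the rank-one density matrices ρ_i(a, b) = ψ_i(a) · conj(ψ_i(b)). Then there exist matrices E_{jk} ∈ Matrix (Fin d × Fin d) (Fin d × Fin d) ℂ for j, k ∈ Fin 2 such that each E_{jk} is positive semidefinite, Σ_{j,k} E_{jk} = 1 (the identity matrix), and trace(E_{jk} * (ρ_j ⊗ ρ_k)) = 0 for all j, k ∈ Fin 2, where ρ_j ⊗ ρ_k denotes the Kronecker product. In other words, the four product states ρ_j ⊗ ρ_k (j, k ∈ {0,1}) are antidistinguishable. -/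

import Mathlib

open MeasureTheory Matrix
open scoped ComplexOrder

/-- The rank-one density matrix `|ψ⟩⟨ψ|` of a vector `ψ`. -/
noncomputable def rankOne {d : ℕ} (ψ : EuclideanSpace ℂ (Fin d)) :
    Matrix (Fin d) (Fin d) ℂ :=
  Matrix.of fun a b => ψ a * (starRingEnd ℂ) (ψ b)

local notation "conj'" => starRingEnd ℂ

/-- outer product matrix `|v⟩⟨v|`. -/
noncomputable def outerM {ι : Type*} [Fintype ι] (v : ι → ℂ) : Matrix ι ι ℂ :=
  Matrix.of fun x y => v x * conj' (v y)

lemma outerM_posSemidef {ι : Type*} [Fintype ι] (v : ι → ℂ) : (outerM v).PosSemidef := by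
  rw [Matrix.posSemidef_iff_dotProduct_mulVec]
  constructor
  · ext x y
    simp only [conjTranspose_apply, outerM, Matrix.of_apply, star_mul', RingHom.coe_coe]
    simp [mul_comm]
  · intro x
    have h : dotProduct (star x) (outerM v *ᵥ x)
        = (∑ i, star (x i) * v i) * conj' (∑ i, star (x i) * v i) := by
      calc dotProduct (star x) (outerM v *ᵥ x)
          = ∑ i, ∑ j, (star (x i) * v i) * (conj' (v j) * x j) := by
            simp only [dotProduct, Matrix.mulVec, outerM, Matrix.of_apply, Finset.mul_sum,
              Pi.star_apply]
            exact Finset.sum_congr rfl fun i _ => Finset.sum_congr rfl fun j _ => by ring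
        _ = (∑ i, star (x i) * v i) * (∑ j, conj' (v j) * x j) :=
            (Finset.sum_mul_sum _ _ _ _).symm
        _ = (∑ i, star (x i) * v i) * conj' (∑ i, star (x i) * v i) := by
            rw [map_sum]
            congr 1
            exact Finset.sum_congr rfl fun j _ => by
              simp only [_root_.map_mul, Complex.star_def, Complex.conj_conj]; ring
    rw [h, Complex.mul_conj]
    exact Complex.zero_le_real.2 (Complex.normSq_nonneg _)

lemma trace_mul_outerM {ι : Type*} [Fintype ι] (M : Matrix ι ι ℂ) (w : ι → ℂ) :
    (M * outerM w).trace = ∑ x, ∑ y, M x y * (w y * conj' (w x)) := by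
  simp only [Matrix.trace, Matrix.diag, Matrix.mul_apply, outerM, Matrix.of_apply]

lemma trace_outerM_outerM {ι : Type*} [Fintype ι] (v w : ι → ℂ)
    (h : ∑ x, v x * conj' (w x) = 0) : (outerM v * outerM w).trace = 0 := by
  rw [trace_mul_outerM]
  have h2 : ∑ x, ∑ y, (outerM v) x y * (w y * conj' (w x))
      = (∑ x, v x * conj' (w x)) * (∑ y, conj' (v y) * w y) := by
    rw [Finset.sum_mul_sum]
    exact Finset.sum_congr rfl fun x _ => Finset.sum_congr rfl fun y _ => by
      simp only [outerM, Matrix.of_apply]; ring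
  rw [h2, h, zero_mul]

lemma sum_prod_factor {d : ℕ} (f g : Fin d → ℂ) :
    ∑ x : Fin d × Fin d, f x.1 * g x.2 = (∑ z, f z) * (∑ z, g z) := by
  rw [Finset.sum_mul_sum, Fintype.sum_prod_type]

set_option maxHeartbeats 2000000 in
theorem auxMain (d : ℕ) (ψ0 ψ1 : Fin d → ℂ) (c : ℝ) (hcnn : 0 ≤ c) (hc2 : c ^ 2 ≤ 1 / 2)
    (h00 : ∑ x, conj' (ψ0 x) * ψ0 x = 1)
    (h11 : ∑ x, conj' (ψ1 x) * ψ1 x = 1)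
    (h01 : ∑ x, conj' (ψ0 x) * ψ1 x = (c : ℂ)) :
    ∃ E : Fin 2 → Fin 2 → Matrix (Fin d × Fin d) (Fin d × Fin d) ℂ,
      (∀ j k, (E j k).PosSemidef) ∧ (∑ j, ∑ k, E j k) = 1 ∧
      ∀ j k, (E j k *
        outerM (fun x : Fin d × Fin d => ![ψ0, ψ1] j x.1 * ![ψ0, ψ1] k x.2)).trace = 0 := by
  classical
  have h10 : ∑ x, conj' (ψ1 x) * ψ0 x = (c : ℂ) := by
    have := congrArg conj' h01
    simpa [map_sum, mul_comm, Complex.conj_ofReal] using this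
  -- ===== scalar layer =====
  have hc1 : c < 1 := by nlinarith
  have hD : 0 < 1 - c^2 := by nlinarith
  set c0 : ℝ := Real.sqrt ((1+c)/2) with hc0def
  set s0 : ℝ := Real.sqrt ((1-c)/2) with hs0def
  have hc0sq : c0^2 = (1+c)/2 := Real.sq_sqrt (by linarith)
  have hs0sq : s0^2 = (1-c)/2 := Real.sq_sqrt (by linarith)
  have hc0pos : 0 < c0 := Real.sqrt_pos.2 (by linarith)
  have hs0pos : 0 < s0 := Real.sqrt_pos.2 (by linarith)
  set X : ℝ := 1 - 2*c^2/(1-c^2) with hXdef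
  set Y : ℝ := Real.sqrt (1 - X^2) with hYdef
  have h1mX : 0 ≤ 1 - X := by
    rw [hXdef]; have : 0 ≤ 2*c^2/(1-c^2) := by positivity
    linarith
  have h1pX : 0 ≤ 1 + X := by
    have h : 1 + X = 2*(1-2*c^2)/(1-c^2) := by rw [hXdef]; field_simp; ring
    rw [h]; exact div_nonneg (by nlinarith) hD.le
  have hX2 : X^2 ≤ 1 := by nlinarith
  have hY2 : Y^2 = 1 - X^2 := Real.sq_sqrt (by nlinarith)
  have hkey : (c0^2)^2 + (s0^2)^2 + 2*(c0^2)*(s0^2)*X = 4*((c0^2)*(s0^2)) := by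
    rw [hc0sq, hs0sq, hXdef]; field_simp; ring
  set UR : Fin 2 → Fin 2 → Fin 2 → ℝ :=
    ![![![1,0], ![(-(c0^2) - s0^2*X)/(2*(c0*s0)), -(s0^2*Y)/(2*(c0*s0))]],
      ![![(-(c0^2) - s0^2*X)/(2*(c0*s0)), -(s0^2*Y)/(2*(c0*s0))], ![X, Y]]] with hURdef
  have hcross : ((-(c0^2) - s0^2*X)/(2*(c0*s0)))^2 + (-(s0^2*Y)/(2*(c0*s0)))^2 = 1 := by
    rw [div_pow, div_pow, ← add_div, div_eq_one_iff_eq (by positivity)]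
    nlinarith [hY2, hkey]
  have hBr : ∀ a b : Fin 2, UR a b 0 ^ 2 + UR a b 1 ^ 2 = 1 := by
    intro a b
    fin_cases a <;> fin_cases b <;>
      simp only [hURdef, Fin.zero_eta, Fin.mk_one, Fin.isValue, Matrix.cons_val_zero,
        Matrix.cons_val_one, Matrix.head_cons]
    · norm_num
    · exact hcross
    · exact hcross
    · linarith [hY2]
  have hAr : ∀ m : Fin 2, c0*c0*UR 0 0 m + c0*s0*UR 0 1 m + s0*c0*UR 1 0 m + s0*s0*UR 1 1 m = 0 := by
    intro m
    fin_cases m <;>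
      simp only [hURdef, Fin.zero_eta, Fin.mk_one, Fin.isValue, Matrix.cons_val_zero,
        Matrix.cons_val_one, Matrix.head_cons] <;>
      field_simp <;> ring
  -- complex casts
  set UC : Fin 2 → Fin 2 → Fin 2 → ℂ := fun a b m => ((UR a b m : ℝ) : ℂ) with hUCdef
  have hBc : ∀ a b : Fin 2, UC a b 0 ^ 2 + UC a b 1 ^ 2 = 1 := by
    intro a b; rw [hUCdef]; beta_reduce; exact_mod_cast hBr a b
  have hAc : ∀ m : Fin 2, (c0:ℂ)*(c0:ℂ)*UC 0 0 m + (c0:ℂ)*(s0:ℂ)*UC 0 1 m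
      + (s0:ℂ)*(c0:ℂ)*UC 1 0 m + (s0:ℂ)*(s0:ℂ)*UC 1 1 m = 0 := by
    intro m; rw [hUCdef]; beta_reduce; exact_mod_cast hAr m
  -- ===== vector layer =====
  set ψv : Fin 2 → Fin d → ℂ := ![ψ0, ψ1] with hψvdef
  have hbil : ∀ a1 a2 b1 b2 : ℂ, ∑ z, conj' (a1 * ψ0 z + a2 * ψ1 z) * (b1 * ψ0 z + b2 * ψ1 z)
      = conj' a1 * b1 + (conj' a1 * b2 * c + (conj' a2 * b1 * c + conj' a2 * b2)) := by
    intro a1 a2 b1 b2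
    have hterm : ∀ z, conj' (a1 * ψ0 z + a2 * ψ1 z) * (b1 * ψ0 z + b2 * ψ1 z)
        = conj' a1 * b1 * (conj' (ψ0 z) * ψ0 z) + (conj' a1 * b2 * (conj' (ψ0 z) * ψ1 z)
          + (conj' a2 * b1 * (conj' (ψ1 z) * ψ0 z) + conj' a2 * b2 * (conj' (ψ1 z) * ψ1 z))) := by
      intro z; simp only [map_add, _root_.map_mul]; ring
    rw [Finset.sum_congr rfl fun z _ => hterm z, Finset.sum_add_distrib, Finset.sum_add_distrib,
      Finset.sum_add_distrib, ← Finset.mul_sum, ← Finset.mul_sum, ← Finset.mul_sum,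
      ← Finset.mul_sum, h00, h01, h10, h11]
    ring
  set k1 : ℝ := (2*c0)⁻¹ with hk1def
  set k2 : ℝ := (2*s0)⁻¹ with hk2def
  set e : Fin 2 → Fin d → ℂ :=
    ![fun z => (k1:ℂ) * ψ0 z + (k1:ℂ) * ψ1 z,
      fun z => (k2:ℂ) * ψ0 z + (-(k2:ℂ)) * ψ1 z] with hedef
  have he0z : ∀ z, e 0 z = (k1:ℂ) * ψ0 z + (k1:ℂ) * ψ1 z := by
    intro z; rw [hedef]; simp
  have he1z : ∀ z, e 1 z = (k2:ℂ) * ψ0 z + (-(k2:ℂ)) * ψ1 z := by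
    intro z; rw [hedef]; simp
  -- orthonormality
  have he00 : ∑ z, conj' (e 0 z) * e 0 z = 1 := by
    rw [Finset.sum_congr rfl fun z _ => by rw [he0z z], hbil]
    simp only [Complex.conj_ofReal]
    have hr : k1 * k1 + (k1 * k1 * c + (k1 * k1 * c + k1 * k1)) = 1 := by
      rw [hk1def]; field_simp; nlinarith [hc0sq]
    exact_mod_cast hr
  have he01 : ∑ z, conj' (e 0 z) * e 1 z = 0 := by
    rw [Finset.sum_congr rfl fun z _ => by rw [he0z z, he1z z], hbil]
    simp only [Complex.conj_ofReal]
    have hr : k1 * k2 + (k1 * (-k2) * c + (k1 * k2 * c + k1 * (-k2))) = 0 := by ring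
    exact_mod_cast hr
  have he10 : ∑ z, conj' (e 1 z) * e 0 z = 0 := by
    rw [Finset.sum_congr rfl fun z _ => by rw [he0z z, he1z z], hbil]
    simp only [Complex.conj_ofReal, map_neg]
    have hr : k2 * k1 + (k2 * k1 * c + ((-k2) * k1 * c + (-k2) * k1)) = 0 := by ring
    exact_mod_cast hr
  have he11 : ∑ z, conj' (e 1 z) * e 1 z = 1 := by
    rw [Finset.sum_congr rfl fun z _ => by rw [he1z z], hbil]
    simp only [Complex.conj_ofReal, map_neg]
    have hr : k2 * k2 + (k2 * (-k2) * c + ((-k2) * k2 * c + (-k2) * (-k2))) = 1 := by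
      rw [hk2def]; field_simp; nlinarith [hs0sq]
    exact_mod_cast hr
  -- frame coefficients of the states
  set gv : Fin 2 → Fin 2 → ℂ := ![![(c0:ℂ), (s0:ℂ)], ![(c0:ℂ), -(s0:ℂ)]] with hgvdef
  have hψ0z : ∀ z, ψ0 z = (1:ℂ) * ψ0 z + (0:ℂ) * ψ1 z := by intro z; ring
  have hψ1z : ∀ z, ψ1 z = (0:ℂ) * ψ0 z + (1:ℂ) * ψ1 z := by intro z; ring
  have hψv0 : ∀ z, ψv 0 z = ψ0 z := by intro z; rw [hψvdef]; simp
  have hψv1 : ∀ z, ψv 1 z = ψ1 z := by intro z; rw [hψvdef]; simp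
  have hbil0 : ∀ a1 a2 : ℂ, ∑ z, conj' (a1 * ψ0 z + a2 * ψ1 z) * ψ0 z
      = conj' a1 + conj' a2 * c := by
    intro a1 a2
    have hterm : ∀ z, conj' (a1 * ψ0 z + a2 * ψ1 z) * ψ0 z
        = conj' a1 * (conj' (ψ0 z) * ψ0 z) + conj' a2 * (conj' (ψ1 z) * ψ0 z) := by
      intro z; simp only [map_add, _root_.map_mul]; ring
    rw [Finset.sum_congr rfl fun z _ => hterm z, Finset.sum_add_distrib, ← Finset.mul_sum,
      ← Finset.mul_sum, h00, h10]
    ring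
  have hbil1 : ∀ a1 a2 : ℂ, ∑ z, conj' (a1 * ψ0 z + a2 * ψ1 z) * ψ1 z
      = conj' a1 * c + conj' a2 := by
    intro a1 a2
    have hterm : ∀ z, conj' (a1 * ψ0 z + a2 * ψ1 z) * ψ1 z
        = conj' a1 * (conj' (ψ0 z) * ψ1 z) + conj' a2 * (conj' (ψ1 z) * ψ1 z) := by
      intro z; simp only [map_add, _root_.map_mul]; ring
    rw [Finset.sum_congr rfl fun z _ => hterm z, Finset.sum_add_distrib, ← Finset.mul_sum,
      ← Finset.mul_sum, h01, h11]
    ring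
  have hg00 : ∑ z, conj' (e 0 z) * ψv 0 z = (c0:ℂ) := by
    rw [Finset.sum_congr rfl fun z _ => by rw [he0z z, hψv0 z], hbil0]
    simp only [Complex.conj_ofReal]
    have hr : k1 + k1 * c = c0 := by
      rw [hk1def]
      have hs : (2*c0) ≠ 0 := by positivity
      field_simp
      nlinarith [hc0sq]
    exact_mod_cast hr
  have hg01 : ∑ z, conj' (e 1 z) * ψv 0 z = (s0:ℂ) := by
    rw [Finset.sum_congr rfl fun z _ => by rw [he1z z, hψv0 z], hbil0]
    simp only [Complex.conj_ofReal, map_neg]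
    have hr : k2 + (-k2) * c = s0 := by
      rw [hk2def]
      have hs : (2*s0) ≠ 0 := by positivity
      field_simp
      nlinarith [hs0sq]
    exact_mod_cast hr
  have hg10 : ∑ z, conj' (e 0 z) * ψv 1 z = (c0:ℂ) := by
    rw [Finset.sum_congr rfl fun z _ => by rw [he0z z, hψv1 z], hbil1]
    simp only [Complex.conj_ofReal]
    have hr : k1 * c + k1 = c0 := by
      rw [hk1def]
      have hs : (2*c0) ≠ 0 := by positivity
      field_simp
      nlinarith [hc0sq]
    exact_mod_cast hr
  have hg11 : ∑ z, conj' (e 1 z) * ψv 1 z = -(s0:ℂ) := by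
    rw [Finset.sum_congr rfl fun z _ => by rw [he1z z, hψv1 z], hbil1]
    simp only [Complex.conj_ofReal, map_neg]
    have hr : k2 * c + -k2 = -s0 := by
      rw [hk2def]
      have hs : (2*s0) ≠ 0 := by positivity
      field_simp
      nlinarith [hs0sq]
    exact_mod_cast hr
  have hgv00 : gv 0 0 = (c0:ℂ) := by rw [hgvdef]; simp
  have hgv01 : gv 0 1 = (s0:ℂ) := by rw [hgvdef]; simp
  have hgv10 : gv 1 0 = (c0:ℂ) := by rw [hgvdef]; simp
  have hgv11 : gv 1 1 = -(s0:ℂ) := by rw [hgvdef]; simp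
  have hg : ∀ i a : Fin 2, ∑ z, conj' (e a z) * ψv i z = gv i a := by
    intro i a
    fin_cases i <;> fin_cases a
    · exact hg00.trans hgv00.symm
    · exact hg01.trans hgv01.symm
    · exact hg10.trans hgv10.symm
    · exact hg11.trans hgv11.symm
  have hgconj : ∀ i a : Fin 2, conj' (gv i a) = gv i a := by
    intro i a
    fin_cases i <;> fin_cases a
    · show conj' (gv 0 0) = gv 0 0; rw [hgv00, Complex.conj_ofReal]
    · show conj' (gv 0 1) = gv 0 1; rw [hgv01, Complex.conj_ofReal]
    · show conj' (gv 1 0) = gv 1 0; rw [hgv10, Complex.conj_ofReal]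
    · show conj' (gv 1 1) = gv 1 1; rw [hgv11, map_neg, Complex.conj_ofReal]
  have hGe : ∀ i a : Fin 2, ∑ z, e a z * conj' (ψv i z) = gv i a := by
    intro i a
    have h := congrArg conj' (hg i a)
    simp only [map_sum, _root_.map_mul, Complex.conj_conj, RingHom.coe_coe] at h
    rw [← hgconj i a, ← h]
  -- pointwise expansion of states in the frame
  have hck : (c0:ℂ) * (k1:ℂ) = 1/2 := by
    have h : c0 * k1 = 1/2 := by
      rw [hk1def]; rw [mul_inv_eq_iff_eq_mul₀ (by positivity)]; ring
    rw [show ((1:ℂ)/2) = ((1/2 : ℝ) : ℂ) by norm_num]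
    exact_mod_cast h
  have hsk : (s0:ℂ) * (k2:ℂ) = 1/2 := by
    have h : s0 * k2 = 1/2 := by
      rw [hk2def]; rw [mul_inv_eq_iff_eq_mul₀ (by positivity)]; ring
    rw [show ((1:ℂ)/2) = ((1/2 : ℝ) : ℂ) by norm_num]
    exact_mod_cast h
  have hpoint : ∀ (i : Fin 2) z, gv i 0 * e 0 z + gv i 1 * e 1 z = ψv i z := by
    intro i z
    fin_cases i
    · show gv 0 0 * e 0 z + gv 0 1 * e 1 z = ψv 0 z
      rw [hgv00, hgv01, hψv0 z, he0z z, he1z z]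
      linear_combination (ψ0 z + ψ1 z) * hck + (ψ0 z - ψ1 z) * hsk
    · show gv 1 0 * e 0 z + gv 1 1 * e 1 z = ψv 1 z
      rw [hgv10, hgv11, hψv1 z, he0z z, he1z z]
      linear_combination (ψ0 z + ψ1 z) * hck - (ψ0 z - ψ1 z) * hsk
  -- ===== matrix layer =====
  set PF : Fin d → Fin d → ℂ := fun x y => e 0 x * conj' (e 0 y) + e 1 x * conj' (e 1 y)
    with hPFdef
  have hPFmul : ∀ x y, ∑ z, PF x z * PF z y = PF x y := by
    intro x y
    have hterm : ∀ z, PF x z * PF z y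
        = e 0 x * conj' (e 0 y) * (conj' (e 0 z) * e 0 z)
          + (e 0 x * conj' (e 1 y) * (conj' (e 0 z) * e 1 z)
          + (e 1 x * conj' (e 0 y) * (conj' (e 1 z) * e 0 z)
          + e 1 x * conj' (e 1 y) * (conj' (e 1 z) * e 1 z))) := by
      intro z; simp only [hPFdef]; ring
    rw [Finset.sum_congr rfl fun z _ => hterm z, Finset.sum_add_distrib, Finset.sum_add_distrib,
      Finset.sum_add_distrib, ← Finset.mul_sum, ← Finset.mul_sum, ← Finset.mul_sum,
      ← Finset.mul_sum, he00, he01, he10, he11]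
    simp only [hPFdef]
    norm_num
  have hPFconj : ∀ x y, conj' (PF x y) = PF y x := by
    intro x y
    simp only [hPFdef, map_add, _root_.map_mul, Complex.conj_conj, RingHom.coe_coe]
    ring
  have hPFfix : ∀ (i : Fin 2) x, ∑ z, PF x z * ψv i z = ψv i x := by
    intro i x
    have hterm : ∀ z, PF x z * ψv i z
        = e 0 x * (conj' (e 0 z) * ψv i z) + e 1 x * (conj' (e 1 z) * ψv i z) := by
      intro z; simp only [hPFdef]; ring
    rw [Finset.sum_congr rfl fun z _ => hterm z, Finset.sum_add_distrib, ← Finset.mul_sum,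
      ← Finset.mul_sum, hg i 0, hg i 1, ← hpoint i x]
    ring
  set PP : Matrix (Fin d × Fin d) (Fin d × Fin d) ℂ :=
    Matrix.of fun x y => PF x.1 y.1 * PF x.2 y.2 with hPPdef
  have hPPh : PPᴴ = PP := by
    ext x y
    simp only [conjTranspose_apply, hPPdef, Matrix.of_apply, Complex.star_def, _root_.map_mul]
    rw [hPFconj, hPFconj]
  have hPPmul : PP * PP = PP := by
    ext x y
    rw [Matrix.mul_apply]
    have hfac := sum_prod_factor (fun z1 => PF x.1 z1 * PF z1 y.1)
      (fun z2 => PF x.2 z2 * PF z2 y.2)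
    beta_reduce at hfac
    have hterm : ∀ z : Fin d × Fin d, PP x z * PP z y
        = PF x.1 z.1 * PF z.1 y.1 * (PF x.2 z.2 * PF z.2 y.2) := by
      intro z; simp only [hPPdef, Matrix.of_apply]; ring
    rw [Finset.sum_congr rfl fun z _ => hterm z, hfac, hPFmul, hPFmul]
    simp [hPPdef]
  set R : Matrix (Fin d × Fin d) (Fin d × Fin d) ℂ := (1/2 : ℂ) • (1 - PP) with hRdef
  have hRR : Rᴴ * R = (1/4 : ℂ) • (1 - PP) := by
    have hhalf : star ((1:ℂ)/2) = (1:ℂ)/2 := by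
      rw [star_div₀, star_one]
      norm_num
    have hRH : Rᴴ = (1/2 : ℂ) • (1 - PP) := by
      rw [hRdef, Matrix.conjTranspose_smul, Matrix.conjTranspose_sub, Matrix.conjTranspose_one,
        hPPh, hhalf]
    have h1 : (1 - PP) * (1 - PP) = 1 - PP := by
      rw [Matrix.sub_mul, Matrix.mul_sub, Matrix.mul_sub, hPPmul]
      simp only [Matrix.one_mul, Matrix.mul_one]
      abel
    rw [hRH, hRdef, smul_mul_assoc, mul_smul_comm, smul_smul, h1]
    norm_num
  have hRRpsd : (Rᴴ * R).PosSemidef := Matrix.posSemidef_conjTranspose_mul_self R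
  -- the measurement vectors
  set sg : Fin 2 → Fin 2 → ℂ := ![![1, 1], ![1, -1]] with hsgdef
  have hsgconj : ∀ j a : Fin 2, conj' (sg j a) = sg j a := by
    intro j a; fin_cases j <;> fin_cases a <;>
      simp [hsgdef, Fin.zero_eta, Fin.mk_one, Fin.isValue]
  set yv : Fin 2 → Fin 2 → Fin 2 → (Fin d × Fin d → ℂ) :=
    fun j k m x => ∑ a : Fin 2, ∑ b : Fin 2,
      sg j a * sg k b * UC a b m / 2 * (e a x.1 * e b x.2) with hyvdef
  have hyconj : ∀ j k m x, conj' (yv j k m x)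
      = ∑ a : Fin 2, ∑ b : Fin 2,
          sg j a * sg k b * UC a b m / 2 * (conj' (e a x.1) * conj' (e b x.2)) := by
    intro j k m x
    simp only [hyvdef, map_sum, map_div₀, _root_.map_mul, hsgconj, hUCdef,
      Complex.conj_ofReal, map_ofNat]
  -- the POVM
  set E : Fin 2 → Fin 2 → Matrix (Fin d × Fin d) (Fin d × Fin d) ℂ :=
    fun j k => outerM (yv j k 0) + outerM (yv j k 1) + Rᴴ * R with hEdef
  refine ⟨E, ?_, ?_, ?_⟩
  · intro j k
    rw [hEdef]
    exact ((outerM_posSemidef _).add (outerM_posSemidef _)).add hRRpsd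
  · -- sums to the identity
    have houter : ∀ x y : Fin d × Fin d,
        (∑ j : Fin 2, ∑ k : Fin 2, ∑ m : Fin 2, yv j k m x * conj' (yv j k m y)) = PP x y := by
      intro x y
      have hexp : ∀ j k m, yv j k m x * conj' (yv j k m y)
          = (∑ a : Fin 2, ∑ b : Fin 2, sg j a * sg k b * UC a b m / 2 * (e a x.1 * e b x.2))
            * (∑ a : Fin 2, ∑ b : Fin 2,
                sg j a * sg k b * UC a b m / 2 * (conj' (e a y.1) * conj' (e b y.2))) := by
        intro j k m; rw [hyconj, hyvdef]
      simp only [hexp]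
      simp only [Fin.sum_univ_two]
      simp only [hsgdef, Matrix.cons_val_zero, Matrix.cons_val_one, Matrix.head_cons,
        one_mul, mul_one, neg_mul, mul_neg, neg_neg, hPPdef, Matrix.of_apply, hPFdef]
      linear_combination
        (e 0 x.1 * e 0 x.2 * conj' (e 0 y.1) * conj' (e 0 y.2)) * hBc 0 0
        + (e 0 x.1 * e 1 x.2 * conj' (e 0 y.1) * conj' (e 1 y.2)) * hBc 0 1
        + (e 1 x.1 * e 0 x.2 * conj' (e 1 y.1) * conj' (e 0 y.2)) * hBc 1 0
        + (e 1 x.1 * e 1 x.2 * conj' (e 1 y.1) * conj' (e 1 y.2)) * hBc 1 1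
    have houterM : (∑ j : Fin 2, ∑ k : Fin 2, (outerM (yv j k 0) + outerM (yv j k 1))) = PP := by
      ext x y
      simp only [Fin.sum_univ_two, Matrix.add_apply, outerM, Matrix.of_apply]
      have := houter x y
      simp only [Fin.sum_univ_two] at this
      linear_combination this
    have hsum4 : (∑ j : Fin 2, ∑ k : Fin 2, E j k)
        = (∑ j : Fin 2, ∑ k : Fin 2, (outerM (yv j k 0) + outerM (yv j k 1)))
          + ((Rᴴ * R) + ((Rᴴ * R) + ((Rᴴ * R) + (Rᴴ * R)))) := by
      simp only [Fin.sum_univ_two, hEdef]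
      abel
    rw [hsum4, houterM, hRR]
    have : ((1/4:ℂ) • (1 - PP)) + (((1/4:ℂ) • (1 - PP)) + (((1/4:ℂ) • (1 - PP))
        + ((1/4:ℂ) • (1 - PP)))) = 1 - PP := by
      rw [← add_smul, ← add_smul, ← add_smul]; norm_num
    rw [this]
    abel
  · -- trace conditions
    intro j k
    have horth : ∀ m, ∑ x : Fin d × Fin d,
        yv j k m x * conj' (ψv j x.1 * ψv k x.2) = 0 := by
      intro m
      have hterm : ∀ x : Fin d × Fin d, yv j k m x * conj' (ψv j x.1 * ψv k x.2)
          = ∑ a : Fin 2, ∑ b : Fin 2, sg j a * sg k b * UC a b m / 2 *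
              ((e a x.1 * conj' (ψv j x.1)) * (e b x.2 * conj' (ψv k x.2))) := by
        intro x
        rw [hyvdef, Finset.sum_mul]
        refine Finset.sum_congr rfl fun a _ => ?_
        rw [Finset.sum_mul]
        refine Finset.sum_congr rfl fun b _ => ?_
        rw [_root_.map_mul]
        ring
      rw [Finset.sum_congr rfl fun x _ => hterm x, Finset.sum_comm]
      have hswap : ∀ a : Fin 2, ∑ x : Fin d × Fin d, (∑ b : Fin 2, sg j a * sg k b * UC a b m / 2 *
          ((e a x.1 * conj' (ψv j x.1)) * (e b x.2 * conj' (ψv k x.2))))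
          = ∑ b : Fin 2, sg j a * sg k b * UC a b m / 2 * (gv j a * gv k b) := by
        intro a
        rw [Finset.sum_comm]
        refine Finset.sum_congr rfl fun b _ => ?_
        rw [← Finset.mul_sum]
        congr 1
        have hfac := sum_prod_factor (fun z => e a z * conj' (ψv j z))
          (fun z => e b z * conj' (ψv k z))
        beta_reduce at hfac
        rw [hfac, hGe j a, hGe k b]
      rw [Finset.sum_congr rfl fun a _ => hswap a]
      simp only [Fin.sum_univ_two]
      fin_cases j <;> fin_cases k <;>
        simp only [hsgdef, hgvdef, Fin.zero_eta, Fin.mk_one, Fin.isValue, Matrix.cons_val_zero,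
          Matrix.cons_val_one, Matrix.head_cons, one_mul, mul_one, neg_mul, mul_neg, neg_neg] <;>
        linear_combination (1/2 : ℂ) * hAc m
    have hfixPP : ∀ x : Fin d × Fin d, ∑ y : Fin d × Fin d, PP x y * (ψv j y.1 * ψv k y.2)
        = ψv j x.1 * ψv k x.2 := by
      intro x
      have hfac := sum_prod_factor (fun z => PF x.1 z * ψv j z) (fun z => PF x.2 z * ψv k z)
      beta_reduce at hfac
      have hterm : ∀ y : Fin d × Fin d, PP x y * (ψv j y.1 * ψv k y.2)
          = PF x.1 y.1 * ψv j y.1 * (PF x.2 y.2 * ψv k y.2) := by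
        intro y; simp only [hPPdef, Matrix.of_apply]; ring
      rw [Finset.sum_congr rfl fun y _ => hterm y, hfac, hPFfix, hPFfix]
    have htrPP : ((1 - PP) * outerM (fun x : Fin d × Fin d => ψv j x.1 * ψv k x.2)).trace = 0 := by
      rw [trace_mul_outerM]
      apply Finset.sum_eq_zero
      intro x _
      have h1 : ∀ y : Fin d × Fin d, (1 - PP) x y * ((ψv j y.1 * ψv k y.2) * conj' (ψv j x.1 * ψv k x.2))
          = ((1 : Matrix (Fin d × Fin d) (Fin d × Fin d) ℂ) x y * (ψv j y.1 * ψv k y.2)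
            - PP x y * (ψv j y.1 * ψv k y.2)) * conj' (ψv j x.1 * ψv k x.2) := by
        intro y; simp only [Matrix.sub_apply]; ring
      rw [Finset.sum_congr rfl fun y _ => h1 y, ← Finset.sum_mul]
      have h2 : ∑ y : Fin d × Fin d, ((1 : Matrix (Fin d × Fin d) (Fin d × Fin d) ℂ) x y
          * (ψv j y.1 * ψv k y.2) - PP x y * (ψv j y.1 * ψv k y.2)) = 0 := by
        rw [Finset.sum_sub_distrib, hfixPP]
        have h3 : ∑ y : Fin d × Fin d, (1 : Matrix (Fin d × Fin d) (Fin d × Fin d) ℂ) x y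
            * (ψv j y.1 * ψv k y.2) = ψv j x.1 * ψv k x.2 := by
          simp [Matrix.one_apply, ite_mul]
        rw [h3, sub_self]
      rw [h2, zero_mul]
    have hψveq : (fun x : Fin d × Fin d => ![ψ0, ψ1] j x.1 * ![ψ0, ψ1] k x.2)
        = fun x : Fin d × Fin d => ψv j x.1 * ψv k x.2 := by rw [hψvdef]
    rw [hψveq, hEdef]
    rw [Matrix.add_mul, Matrix.add_mul, Matrix.trace_add, Matrix.trace_add]
    rw [trace_outerM_outerM _ _ (by
        have := horth 0
        simpa only [_root_.map_mul] using this),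
      trace_outerM_outerM _ _ (by
        have := horth 1
        simpa only [_root_.map_mul] using this)]
    rw [hRR, Matrix.smul_mul, Matrix.trace_smul, htrPP]
    simp

set_option maxHeartbeats 1000000 in
/-- For unit vectors `ψ₀, ψ₁` with `‖⟪ψ₀, ψ₁⟫‖² ≤ 1/2`, the four product states
`ρ_j ⊗ ρ_k` are antidistinguishable: there is a POVM `(E_{jk})` with
`Tr(E_{jk} (ρ_j ⊗ ρ_k)) = 0` for all `j, k`. -/
theorem stmt4 (d : ℕ) (hd : 2 ≤ d)
    (ψ : Fin 2 → EuclideanSpace ℂ (Fin d)) (hψ : ∀ i, ‖ψ i‖ = 1)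
    (hover : ‖(inner ℂ (ψ 0) (ψ 1) : ℂ)‖ ^ 2 ≤ 1 / 2) :
    ∃ E : Fin 2 → Fin 2 → Matrix (Fin d × Fin d) (Fin d × Fin d) ℂ,
      (∀ j k, (E j k).PosSemidef) ∧
      (∑ j, ∑ k, E j k) = 1 ∧
      ∀ j k,
        (E j k * Matrix.kroneckerMap (· * ·) (rankOne (ψ j)) (rankOne (ψ k))).trace = 0 := by
  classical
  set s : ℂ := inner ℂ (ψ 0) (ψ 1) with hs
  set c : ℝ := ‖s‖ with hc
  have hcnn : 0 ≤ c := norm_nonneg s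
  have hc2 : c ^ 2 ≤ 1 / 2 := hover
  have h00 : ∑ x, conj' (ψ 0 x) * ψ 0 x = 1 := by
    have h := inner_self_eq_norm_sq_to_K (𝕜 := ℂ) (ψ 0)
    rw [hψ 0] at h
    simp only [PiLp.inner_apply, RCLike.inner_apply] at h
    simpa [mul_comm] using h
  have h11 : ∑ x, conj' (ψ 1 x) * ψ 1 x = 1 := by
    have h := inner_self_eq_norm_sq_to_K (𝕜 := ℂ) (ψ 1)
    rw [hψ 1] at h
    simp only [PiLp.inner_apply, RCLike.inner_apply] at h
    simpa [mul_comm] using h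
  have hs01 : ∑ x, conj' (ψ 0 x) * ψ 1 x = s := by
    rw [hs]
    simp only [PiLp.inner_apply, RCLike.inner_apply, mul_comm]
  set u : ℂ := if s = 0 then 1 else (c : ℂ) / s with hu
  have huu' : u * conj' u = 1 := by
    by_cases h0 : s = 0
    · rw [hu, if_pos h0]; simp
    · have hnu : ‖u‖ = 1 := by
        rw [hu, if_neg h0, norm_div, Complex.norm_real, Real.norm_eq_abs, abs_of_nonneg hcnn]
        rw [hc, div_self (norm_ne_zero_iff.2 h0)]
      rw [Complex.mul_conj, Complex.normSq_eq_norm_sq, hnu]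
      norm_num
  have hus : u * s = (c : ℂ) := by
    by_cases h0 : s = 0
    · rw [h0, mul_zero]
      rw [hc, h0]
      simp
    · rw [hu, if_neg h0, div_mul_cancel₀ _ h0]
  set ψ1' : Fin d → ℂ := fun x => u * ψ 1 x with hψ1'
  have h11' : ∑ x, conj' (ψ1' x) * ψ1' x = 1 := by
    have hterm : ∀ x, conj' (ψ1' x) * ψ1' x = (u * conj' u) * (conj' (ψ 1 x) * ψ 1 x) := by
      intro x; rw [hψ1']; simp only [_root_.map_mul]; ring
    rw [Finset.sum_congr rfl fun x _ => hterm x, ← Finset.mul_sum, h11, huu', mul_one]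
  have h01' : ∑ x, conj' (ψ 0 x) * ψ1' x = (c : ℂ) := by
    have hterm : ∀ x, conj' (ψ 0 x) * ψ1' x = u * (conj' (ψ 0 x) * ψ 1 x) := by
      intro x; rw [hψ1']; ring
    rw [Finset.sum_congr rfl fun x _ => hterm x, ← Finset.mul_sum, hs01, hus]
  obtain ⟨E, hpsd, hsum1, htr⟩ := auxMain d (fun x => ψ 0 x) ψ1' c hcnn hc2 h00 h11' h01'
  refine ⟨E, hpsd, hsum1, ?_⟩
  have hW : ∀ j k : Fin 2, Matrix.kroneckerMap (· * ·) (rankOne (ψ j)) (rankOne (ψ k))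
      = outerM (fun x : Fin d × Fin d =>
          ![fun x => ψ 0 x, ψ1'] j x.1 * ![fun x => ψ 0 x, ψ1'] k x.2) := by
    intro j k
    ext x y
    rw [Matrix.kroneckerMap_apply]
    have huu2 : (u * conj' u) * (u * conj' u) = 1 := by rw [huu']; ring
    simp only [rankOne, outerM, Matrix.of_apply, _root_.map_mul]
    fin_cases j <;> fin_cases k <;>
      simp only [Matrix.cons_val_zero, Matrix.cons_val_one, Matrix.head_cons, Fin.zero_eta,
        Fin.mk_one, Fin.isValue, hψ1', _root_.map_mul]
    · ring
    · linear_combination (-(ψ 0 x.1 * conj' (ψ 0 y.1) * ψ 1 x.2 * conj' (ψ 1 y.2))) * huu'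
    · linear_combination (-(ψ 1 x.1 * conj' (ψ 1 y.1) * ψ 0 x.2 * conj' (ψ 0 y.2))) * huu'
    · linear_combination (-(ψ 1 x.1 * conj' (ψ 1 y.1) * ψ 1 x.2 * conj' (ψ 1 y.2))) * huu2
  intro j k
  rw [hW j k]
  exact htr j k
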